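/- For all k ≥ 0, W_{k+1} = S_{k,k} · S_{k,k-2} · … · S_{k,k-2⌊k/2⌋} · (k+1), where S_{k,i} denotes the suffix of W_k of length |W_i|, the concatenation runs over the indices k, k-2, …, k-2⌊k/2⌋ in decreasing order, and the final factor is the single letter k+1. (For example, W_5 = 01223234 · 234 · 4 · 5.) -/

import Mathlib

/-- The morphism `phi` on the alphabet `ℕ`: `phi (2i) = (2i)(2i+1)` and `phi (2i+1) = (2i+2)`. -/
def phi (a : ℕ) : List ℕ := if a % 2 = 0 then [a, a + 1] else [a + 1]

/-- The finite ZWW words: `W n = phi^n(0)`, so `W 0 = 0`, `W 1 = 01`, `W 2 = 012`, `W 3 = 01223`. -/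
def W (n : ℕ) : List ℕ := (fun w => w.flatMap phi)^[n] [0]

lemma W_succ (n : ℕ) : W (n + 1) = (W n).flatMap phi :=
  Function.iterate_succ_apply' _ _ _

lemma phi_shift (a : ℕ) : phi (a + 2) = (phi a).map (· + 2) := by
  unfold phi
  have h : (a + 2) % 2 = a % 2 := Nat.add_mod_right a 2
  rw [h]
  split <;> simp

lemma flatMap_shift (w : List ℕ) :
    (w.map (· + 2)).flatMap phi = (w.flatMap phi).map (· + 2) := by
  induction w with
  | nil => simp
  | cons a t ih => simp [ih, phi_shift]

lemma W_rec (k : ℕ) : W (k + 2) = W (k + 1) ++ (W k).map (· + 2) := by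
  induction k with
  | zero => rfl
  | succ k ih =>
    show W (k + 2 + 1) = _
    rw [W_succ (k + 2), ih, List.flatMap_append, flatMap_shift, ← W_succ k, ← W_succ (k + 1), ih]

lemma len_mono : Monotone (fun n => (W n).length) := by
  apply monotone_nat_of_le_succ
  intro n
  cases n with
  | zero => simp [W, phi]
  | succ m =>
    rw [W_rec m]
    simp

lemma suffix_eq : ∀ i k, 2 * i ≤ k →
    (W k).drop ((W k).length - (W (k - 2 * i)).length)
      = (W (k - 2 * i)).map (fun x => x + 2 * i) := by
  intro i
  induction i with
  | zero => intro k _; simp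
  | succ i ih =>
    intro k hk
    obtain ⟨k', rfl⟩ : ∃ k', k = k' + 2 := ⟨k - 2, by omega⟩
    have h2i : 2 * i ≤ k' := by omega
    have hm : k' + 2 - 2 * (i + 1) = k' - 2 * i := by omega
    have hlen : (W (k' - 2 * i)).length ≤ (W k').length := len_mono (by omega)
    rw [hm, W_rec k']
    have harith : (W (k' + 1) ++ (W k').map (· + 2)).length - (W (k' - 2 * i)).length
        = (W (k' + 1)).length + ((W k').length - (W (k' - 2 * i)).length) := by
      simp only [List.length_append, List.length_map]
      omega
    rw [harith, List.drop_length_add_append, ← List.map_drop, ih k' h2i, List.map_map]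
    apply List.map_congr_left
    intro x _
    simp only [Function.comp]
    omega

/-- For all `k ≥ 0`, `W (k+1) = S k k · S k (k-2) · … · S k (k - 2⌊k/2⌋) · (k+1)`,
where `S k m` is the suffix of `W k` of length `|W m|` and the final factor is the
single letter `k+1`. -/
theorem zww_suffix_factorisation : ∀ k : ℕ,
    W (k + 1) =
      ((List.range (k / 2 + 1)).map
        (fun i => (W k).drop ((W k).length - (W (k - 2 * i)).length))).flatten
      ++ [k + 1] := by
  have key : ∀ k : ℕ, W (k + 1) =
      ((List.range (k / 2 + 1)).map
        (fun i => (W (k - 2 * i)).map (fun x => x + 2 * i))).flatten ++ [k + 1] := by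
    intro k
    induction k using Nat.twoStepInduction with
    | zero => rfl
    | one => rfl
    | more k ih _ =>
      have hdiv : (k + 2) / 2 = k / 2 + 1 := by omega
      have reidx : ((List.range ((k + 2) / 2 + 1)).map
            (fun i => (W (k + 2 - 2 * i)).map (fun x => x + 2 * i))).flatten
          = W (k + 2) ++
            ((((List.range (k / 2 + 1)).map
              (fun i => (W (k - 2 * i)).map (fun x => x + 2 * i))).flatten).map (· + 2)) := by
        rw [hdiv, List.range_succ_eq_map, List.map_cons, List.flatten_cons, List.map_map]
        congr 1
        · simp
        · rw [List.map_flatten, List.map_map]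
          congr 1
          apply List.map_congr_left
          intro i _
          simp only [Function.comp, List.map_map]
          have h1 : k + 2 - 2 * (i + 1) = k - 2 * i := by omega
          rw [show Nat.succ i = i + 1 from rfl, h1]
          apply List.map_congr_left
          intro x _
          simp only [Function.comp_apply]
          omega
      rw [reidx, show k + 2 + 1 = k + 1 + 2 from rfl, W_rec (k + 1), ih, List.map_append,
        List.append_assoc]
      congr 2
  intro k
  rw [key k]
  congr 1
  apply congrArg
  apply List.map_congr_left
  intro i hi
  rw [List.mem_range] at hi
  exact (suffix_eq i k (by omega)).symm
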